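/- Let p be a unimodular symplectic form on a free R-module N and b ∈ Sp(p,R) be R-semisimple. Then there is a b-invariant p-orthogonal direct sum decomposition N = N₁ ⊕ N_* such that b acts as the identity on N₁ and (b − 1) restricted to N_* is invertible. -/

import Mathlib

open LinearMap Finset

/-- `R` is either a field of characteristic `0`, or the ring of integers of a `p`-adic
field with odd residue characteristic. -/
def IsPaperRing (R : Type*) [CommRing R] [IsDomain R] [IsLocalRing R] : Prop :=
  (IsField R ∧ CharZero R) ∨
  (IsDiscreteValuationRing R ∧ IsAdicComplete (IsLocalRing.maximalIdeal R) R ∧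
    Finite (IsLocalRing.ResidueField R) ∧ ringChar (IsLocalRing.ResidueField R) ≠ 2)

/-- `g` is `R`-semisimple. -/
def IsRSemisimple (R : Type*) [CommRing R] [IsLocalRing R] {M : Type*} [AddCommGroup M]
    [Module R M] (g : M ≃ₗ[R] M) : Prop :=
  (IsField R ∧ Module.End.IsSemisimple (g : M →ₗ[R] M)) ∨
  (∃ k : ℕ, 0 < k ∧ Nat.Coprime k (ringChar (IsLocalRing.ResidueField R)) ∧ g ^ k = 1)

/-- Given that `ker (b - 1)` and `range (b - 1)` are complementary, all the claimed
properties of the splitting follow formally. -/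
private lemma splitting_of_isCompl {R : Type*} [CommRing R]
    {N : Type*} [AddCommGroup N] [Module R N]
    (p : N →ₗ[R] N →ₗ[R] R)
    (b : N ≃ₗ[R] N) (hb : ∀ x y : N, p (b x) (b y) = p x y)
    (hcompl : IsCompl (LinearMap.ker ((b : N →ₗ[R] N) - LinearMap.id))
      (LinearMap.range ((b : N →ₗ[R] N) - LinearMap.id))) :
    ∃ N₁ Nstar : Submodule R N, IsCompl N₁ Nstar ∧
      (∀ x ∈ N₁, ∀ y ∈ Nstar, p x y = 0) ∧
      (∀ x ∈ N₁, b x = x) ∧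
      (∀ x ∈ Nstar, b x ∈ Nstar) ∧
      Set.BijOn (fun x => b x - x) (Nstar : Set N) (Nstar : Set N) := by
  set f : N →ₗ[R] N := (b : N →ₗ[R] N) - LinearMap.id with hf
  have hfx : ∀ x : N, f x = b x - x := fun x => rfl
  have hker : ∀ x, x ∈ LinearMap.ker f ↔ b x = x := by
    intro x
    rw [LinearMap.mem_ker, hfx, sub_eq_zero]
  refine ⟨LinearMap.ker f, LinearMap.range f, hcompl, ?_, ?_, ?_, ?_, ?_, ?_⟩
  · -- orthogonality
    rintro x hx y ⟨z, rfl⟩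
    have hbx : b x = x := (hker x).1 hx
    rw [hfx, map_sub, ← hbx, hb, hbx, sub_self]
  · -- b = id on N₁
    intro x hx; exact (hker x).1 hx
  · -- b maps Nstar into Nstar
    rintro y ⟨z, rfl⟩
    refine ⟨b z, ?_⟩
    rw [hfx, hfx, map_sub]
  · -- maps to
    intro x _
    exact ⟨x, rfl⟩
  · -- inj on
    intro x hx y hy hxy
    have : f x = f y := by simpa [hfx] using hxy
    rw [SetLike.mem_coe] at hx hy
    have hmem : x - y ∈ LinearMap.ker f ⊓ LinearMap.range f := by
      refine ⟨LinearMap.mem_ker.mpr ?_, Submodule.sub_mem _ hx hy⟩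
      rw [map_sub, this, sub_self]
    have := hcompl.inf_eq_bot ▸ hmem
    rw [Submodule.mem_bot] at this
    exact sub_eq_zero.mp this
  · -- surj on
    rintro y ⟨z, rfl⟩
    have hz : z ∈ LinearMap.ker f ⊔ LinearMap.range f := by
      rw [hcompl.sup_eq_top]; trivial
    obtain ⟨z₁, hz₁, z₂, hz₂, rfl⟩ := Submodule.mem_sup.mp hz
    refine ⟨z₂, hz₂, ?_⟩
    show b z₂ - z₂ = f (z₁ + z₂)
    rw [map_add, LinearMap.mem_ker.mp hz₁, zero_add, hfx]

/-- If `b` has finite order `k` with `k` a unit of `R`, then `ker (b - 1)` and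
`range (b - 1)` are complementary (averaging argument). -/
private lemma isCompl_of_pow_eq_one {R : Type*} [CommRing R]
    {N : Type*} [AddCommGroup N] [Module R N]
    (b : N ≃ₗ[R] N) {k : ℕ} (hu : IsUnit (k : R)) (hbk : b ^ k = 1) :
    IsCompl (LinearMap.ker ((b : N →ₗ[R] N) - LinearMap.id))
      (LinearMap.range ((b : N →ₗ[R] N) - LinearMap.id)) := by
  set B : N →ₗ[R] N := (b : N →ₗ[R] N) with hB
  set f : N →ₗ[R] N := B - LinearMap.id with hf
  have hfx : ∀ x : N, f x = B x - x := fun x => rfl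
  have hcoe : ∀ n : ℕ, ((b ^ n : N ≃ₗ[R] N) : N →ₗ[R] N) = B ^ n := by
    intro n
    induction n with
    | zero => rfl
    | succ n ih => rw [pow_succ, pow_succ, ← ih]; rfl
  have hBk : B ^ k = 1 := by rw [← hcoe, hbk]; rfl
  have hinv : (↑hu.unit⁻¹ : R) * (k : R) = 1 := by
    simpa [hu.unit_spec] using hu.unit.inv_mul
  have hcancel : ∀ x : N, (k : R) • x = 0 → x = 0 := by
    intro x hx
    calc x = ((↑hu.unit⁻¹ : R) * (k : R)) • x := by rw [hinv, one_smul]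
    _ = (↑hu.unit⁻¹ : R) • ((k : R) • x) := by rw [mul_smul]
    _ = 0 := by rw [hx, smul_zero]
  have htel : ∀ (x : N) (n : ℕ),
      f (∑ i ∈ range n, (B ^ i) x) = (B ^ n) x - x := by
    intro x n
    rw [hfx, map_sum, ← Finset.sum_sub_distrib]
    have : ∀ i, B ((B ^ i) x) - (B ^ i) x = (B ^ (i + 1)) x - (B ^ i) x := by
      intro i; rw [pow_succ', Module.End.mul_apply]
    rw [Finset.sum_congr rfl fun i _ => this i, Finset.sum_range_sub (fun i => (B ^ i) x)]
    simp
  constructor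
  · -- disjoint
    rw [disjoint_iff, eq_bot_iff]
    rintro x ⟨hx1, hx2⟩
    rw [SetLike.mem_coe, LinearMap.mem_ker, hfx, sub_eq_zero] at hx1
    obtain ⟨z, hz⟩ := hx2
    have hpow : ∀ i : ℕ, (B ^ i) x = x := by
      intro i
      induction i with
      | zero => rfl
      | succ n ih => rw [pow_succ', Module.End.mul_apply, ih]; exact hx1
    have h0 : ∑ i ∈ range k, (B ^ i) x = 0 := by
      have key : ∀ i, (B ^ i) x = (B ^ (i + 1)) z - (B ^ i) z := by
        intro i
        rw [← hz, hfx, map_sub, ← Module.End.mul_apply, ← pow_succ]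
      rw [Finset.sum_congr rfl fun i _ => key i,
        Finset.sum_range_sub (fun i => (B ^ i) z), hBk]
      simp
    have hkx : (k : R) • x = 0 := by
      calc (k : R) • x = ∑ _i ∈ range k, x := by
            rw [Finset.sum_const, Finset.card_range, Nat.cast_smul_eq_nsmul]
      _ = ∑ i ∈ range k, (B ^ i) x := Finset.sum_congr rfl fun i _ => (hpow i).symm
      _ = 0 := h0
    rw [Submodule.mem_bot]
    exact hcancel x hkx
  · -- codisjoint
    rw [codisjoint_iff, eq_top_iff]
    intro x _
    have hw : (∑ i ∈ range k, (B ^ i) x) ∈ LinearMap.ker f := by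
      rw [LinearMap.mem_ker, htel, hBk]; simp
    have hr : (k : R) • x - (∑ i ∈ range k, (B ^ i) x) ∈ LinearMap.range f := by
      have heq : (k : R) • x - (∑ i ∈ range k, (B ^ i) x)
          = ∑ i ∈ range k, (x - (B ^ i) x) := by
        rw [Finset.sum_sub_distrib, Finset.sum_const, Finset.card_range,
          Nat.cast_smul_eq_nsmul]
      rw [heq]
      refine Submodule.sum_mem _ fun i _ => ?_
      have : x - (B ^ i) x = f (-(∑ j ∈ range i, (B ^ j) x)) := by
        rw [map_neg, htel, neg_sub]
      exact ⟨_, this.symm⟩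
    have hsum : (k : R) • x ∈ LinearMap.ker f ⊔ LinearMap.range f := by
      have := Submodule.add_mem _ (Submodule.mem_sup_left hw) (Submodule.mem_sup_right hr)
      simpa using this
    have hx := Submodule.smul_mem _ (↑hu.unit⁻¹ : R) hsum
    rw [smul_smul, hinv, one_smul] at hx
    exact hx

/-- Over a field, for a semisimple `b`, `ker (b - 1)` and `range (b - 1)` are
complementary. -/
private lemma isCompl_of_semisimple {R : Type*} [Field R]
    {N : Type*} [AddCommGroup N] [Module R N] [Module.Finite R N]
    (b : N ≃ₗ[R] N) (hss : Module.End.IsSemisimple (b : N →ₗ[R] N)) :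
    IsCompl (LinearMap.ker ((b : N →ₗ[R] N) - LinearMap.id))
      (LinearMap.range ((b : N →ₗ[R] N) - LinearMap.id)) := by
  set f : N →ₗ[R] N := (b : N →ₗ[R] N) - LinearMap.id with hf
  have hfss : Module.End.IsSemisimple f := by
    have : Module.End.IsSemisimple ((b : N →ₗ[R] N) - algebraMap R (Module.End R N) 1) :=
      Module.End.isSemisimple_sub_algebraMap_iff.mpr hss
    simpa [hf, Module.algebraMap_end_eq_smul_id] using this
  have hdisj : Disjoint (LinearMap.ker f) (LinearMap.range f) := by
    rw [disjoint_iff, eq_bot_iff]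
    rintro x ⟨hx1, hx2⟩
    rw [SetLike.mem_coe, LinearMap.mem_ker] at hx1
    obtain ⟨y, hy⟩ := hx2
    have h2 : y ∈ Module.End.genEigenspace f 0 (2 : ℕ) := by
      rw [Module.End.mem_genEigenspace_nat]
      simp only [zero_smul, sub_zero, LinearMap.mem_ker, pow_two, Module.End.mul_apply]
      rw [hy]; exact hx1
    have := hfss.isFinitelySemisimple.genEigenspace_eq_eigenspace 0 (k := (2 : ℕ))
      (by norm_num)
    rw [this, Module.End.eigenspace_zero, LinearMap.mem_ker] at h2
    rw [Submodule.mem_bot, ← hy, h2]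
  refine ⟨hdisj, codisjoint_iff.mpr ?_⟩
  apply Submodule.eq_top_of_finrank_eq
  have h1 := LinearMap.finrank_range_add_finrank_ker f
  have h2 := Submodule.finrank_sup_add_finrank_inf_eq (LinearMap.ker f) (LinearMap.range f)
  rw [disjoint_iff.mp hdisj] at h2
  simp only [finrank_bot, add_zero] at h2
  omega

/-- For an `R`-semisimple symplectic transformation `b` of a unimodular symplectic free
module `(N, p)`, there is a `b`-invariant `p`-orthogonal decomposition `N = N₁ ⊕ N⋆` with
`b = id` on `N₁` and `b − 1` invertible on `N⋆`. -/
theorem symplectic_fixed_space_splitting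
    {R : Type*} [CommRing R] [IsDomain R] [IsLocalRing R] (hR : IsPaperRing R)
    {N : Type*} [AddCommGroup N] [Module R N] [Module.Free R N] [Module.Finite R N]
    (p : N →ₗ[R] N →ₗ[R] R) (halt : ∀ x : N, p x x = 0)
    (hunimod : Function.Bijective ⇑p)
    (b : N ≃ₗ[R] N) (hb : ∀ x y : N, p (b x) (b y) = p x y)
    (hss : IsRSemisimple R b) :
    ∃ N₁ Nstar : Submodule R N, IsCompl N₁ Nstar ∧
      (∀ x ∈ N₁, ∀ y ∈ Nstar, p x y = 0) ∧
      (∀ x ∈ N₁, b x = x) ∧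
      (∀ x ∈ Nstar, b x ∈ Nstar) ∧
      Set.BijOn (fun x => b x - x) (Nstar : Set N) (Nstar : Set N) := by
  rcases hss with ⟨hK, hsemi⟩ | ⟨k, hk, hcop, hbk⟩
  · letI := hK.toField
    exact splitting_of_isCompl p b hb (isCompl_of_semisimple b hsemi)
  · -- `k` is a unit of `R` since its residue is nonzero.
    have hku : IsUnit (k : R) := by
      rw [← IsLocalRing.notMem_maximalIdeal]
      intro hmem
      have hres : (k : IsLocalRing.ResidueField R) = 0 := by
        rw [← map_natCast (IsLocalRing.residue R) k]
        exact (IsLocalRing.residue_eq_zero_iff _).mpr hmem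
      haveI : CharP (IsLocalRing.ResidueField R)
          (ringChar (IsLocalRing.ResidueField R)) := ringChar.charP _
      have hdvd : ringChar (IsLocalRing.ResidueField R) ∣ k :=
        (CharP.cast_eq_zero_iff _ _ _).mp hres
      have h1 : ringChar (IsLocalRing.ResidueField R) = 1 :=
        Nat.Coprime.eq_one_of_dvd hcop.symm hdvd
      exact CharP.char_ne_one (IsLocalRing.ResidueField R)
        (ringChar (IsLocalRing.ResidueField R)) h1
    exact splitting_of_isCompl p b hb (isCompl_of_pow_eq_one b hku hbk)
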